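/- Let σ > 0, let m^V, m^W ∈ ℝ^N and let Σ^V, Σ^W be symmetric positive semidefinite N×N real matrices. Set Σ̂ = 2σ²I + Σ^V + Σ^W and Z(V,W) = det(I + (1/σ²)Σ^V)^{1/4} · det(I + (1/σ²)Σ^W)^{1/4} / det(I + (1/(2σ²))(Σ^V + Σ^W))^{1/2}. Then the normalized L² scalar product of the regularized Gaussian densities satisfies ⟨N(m^V, Σ^V + σ²I), N(m^W, Σ^W + σ²I)⟩ / (‖N(m^V, Σ^V + σ²I)‖_{L²} · ‖N(m^W, Σ^W + σ²I)‖_{L²}) = Z(V,W) · exp(-½ (m^V - m^W)^T Σ̂^{-1} (m^V - m^W)). -/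

import Mathlib

open Matrix MeasureTheory

section helpers
variable {N : ℕ}
open scoped MatrixOrder

private lemma genRBF_exp_rpow (x y : ℝ) : (Real.exp x) ^ y = Real.exp (x * y) := by
  rw [Real.rpow_def_of_pos (Real.exp_pos x), Real.log_exp]

private lemma genRBF_int_base (N : ℕ) :
    ∫ x : Fin N → ℝ, Real.exp (-(1/2) * (x ⬝ᵥ x)) = (2 * Real.pi) ^ ((N : ℝ)/2) := by
  have h1 : ∀ x : Fin N → ℝ, Real.exp (-(1/2) * (x ⬝ᵥ x))
      = ∏ i, Real.exp (-(1/2) * (x i)^2) := by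
    intro x
    rw [← Real.exp_sum]
    congr 1
    simp [dotProduct, Finset.mul_sum, pow_two]
  simp_rw [h1]
  rw [MeasureTheory.integral_fintype_prod_volume_eq_pow (ι := Fin N) (fun t => Real.exp (-(1/2)*t^2))]
  have h2 : ∫ t : ℝ, Real.exp (-(1/2)*t^2) = Real.sqrt (2*Real.pi) := by
    have := integral_gaussian (1/2 : ℝ)
    rw [this]
    norm_num [mul_comm]
  rw [h2, Fintype.card_fin]
  rw [Real.sqrt_eq_rpow, ← Real.rpow_natCast ((2*Real.pi) ^ ((1:ℝ)/2)) N,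
    ← Real.rpow_mul (by positivity)]
  ring_nf

private lemma genRBF_int_cov (M : Matrix (Fin N) (Fin N) ℝ) (hM : M.det ≠ 0)
    (f : (Fin N → ℝ) → ℝ) (hf : Continuous f) :
    ∫ x, f (M *ᵥ x) = |M.det|⁻¹ * ∫ y, f y := by
  have hT : Measurable (Matrix.toLin' M) :=
    (Matrix.toLin' M).continuous_of_finiteDimensional.measurable
  have h1 : ∫ x, f (M *ᵥ x) = ∫ y, f y ∂(Measure.map (Matrix.toLin' M) volume) := by
    rw [integral_map hT.aemeasurable hf.aestronglyMeasurable]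
    simp [Matrix.toLin'_apply]
  rw [h1, Real.map_matrix_volume_pi_eq_smul_volume_pi hM, integral_smul_measure,
    ENNReal.toReal_ofReal (by positivity), smul_eq_mul, abs_inv]

private lemma genRBF_int_quad (M : Matrix (Fin N) (Fin N) ℝ) (hM : M.PosDef) :
    ∫ x : Fin N → ℝ, Real.exp (-(1/2) * (x ⬝ᵥ (M *ᵥ x)))
      = (2 * Real.pi) ^ ((N : ℝ)/2) * M.det ^ (-(1:ℝ)/2) := by
  set S := CFC.sqrt M with hS
  have hSpsd : S.PosSemidef := (CFC.sqrt_nonneg M).posSemidef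
  have hSsq : S * S = M := CFC.sqrt_mul_sqrt_self M hM.posSemidef.nonneg
  have hdet2 : S.det * S.det = M.det := by rw [← det_mul, hSsq]
  have hdetpos : 0 < M.det := hM.det_pos
  have hSdet : S.det ≠ 0 := by
    intro h; rw [h, mul_zero] at hdet2; exact hdetpos.ne' hdet2.symm
  have hSsymm : Sᵀ = S := hSpsd.isHermitian.eq
  have key : ∀ x : Fin N → ℝ, x ⬝ᵥ (M *ᵥ x) = (S *ᵥ x) ⬝ᵥ (S *ᵥ x) := by
    intro x
    rw [← hSsq, ← Matrix.mulVec_mulVec, Matrix.dotProduct_mulVec _ S,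
      ← Matrix.mulVec_transpose, hSsymm]
  simp_rw [key]
  have := genRBF_int_cov S hSdet (fun y => Real.exp (-(1/2) * (y ⬝ᵥ y))) (by continuity)
  rw [show (∫ x : Fin N → ℝ, Real.exp (-(1/2) * ((S *ᵥ x) ⬝ᵥ (S *ᵥ x))))
      = ∫ x : Fin N → ℝ, (fun y => Real.exp (-(1/2) * (y ⬝ᵥ y))) (S *ᵥ x) from rfl,
    this, genRBF_int_base]
  have hsq : |S.det| = Real.sqrt M.det := by
    rw [← hdet2, ← pow_two, Real.sqrt_sq_eq_abs]
  rw [hsq, mul_comm]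
  congr 1
  rw [Real.sqrt_eq_rpow, ← Real.rpow_neg hdetpos.le]
  norm_num

private lemma genRBF_dot_swap {C : Matrix (Fin N) (Fin N) ℝ} (hC : Cᵀ = C) (a b : Fin N → ℝ) :
    a ⬝ᵥ (C *ᵥ b) = b ⬝ᵥ (C *ᵥ a) := by
  rw [Matrix.dotProduct_mulVec, ← Matrix.mulVec_transpose, hC, dotProduct_comm]

private lemma genRBF_dot_collapse {C D : Matrix (Fin N) (Fin N) ℝ} (hC : Cᵀ = C)
    (a b : Fin N → ℝ) :
    (C *ᵥ a) ⬝ᵥ (D *ᵥ b) = a ⬝ᵥ ((C * D) *ᵥ b) := by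
  rw [show C *ᵥ a = a ᵥ* C from by rw [← Matrix.mulVec_transpose, hC],
    ← Matrix.dotProduct_mulVec, Matrix.mulVec_mulVec]

private lemma genRBF_complete_square (A B : Matrix (Fin N) (Fin N) ℝ)
    (hA : A.PosDef) (hB : B.PosDef) (m1 m2 x : Fin N → ℝ) :
    (x - m1) ⬝ᵥ (A⁻¹ *ᵥ (x - m1)) + (x - m2) ⬝ᵥ (B⁻¹ *ᵥ (x - m2))
      = (x - (A⁻¹ + B⁻¹)⁻¹ *ᵥ (A⁻¹ *ᵥ m1 + B⁻¹ *ᵥ m2)) ⬝ᵥ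
          ((A⁻¹ + B⁻¹) *ᵥ (x - (A⁻¹ + B⁻¹)⁻¹ *ᵥ (A⁻¹ *ᵥ m1 + B⁻¹ *ᵥ m2)))
        + (m1 - m2) ⬝ᵥ ((A + B)⁻¹ *ᵥ (m1 - m2)) := by
  set P := A⁻¹ with hPdef
  set R := B⁻¹ with hRdef
  set M := P + R with hMdef
  have hP : P.PosDef := hA.inv
  have hR : R.PosDef := hB.inv
  have hM : M.PosDef := hP.add hR
  have hAd : IsUnit A.det := isUnit_iff_ne_zero.2 hA.det_pos.ne'
  have hBd : IsUnit B.det := isUnit_iff_ne_zero.2 hB.det_pos.ne'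
  have hMd : IsUnit M.det := isUnit_iff_ne_zero.2 hM.det_pos.ne'
  have hPs : Pᵀ = P := hP.isHermitian.eq
  have hRs : Rᵀ = R := hR.isHermitian.eq
  have hMis : (M⁻¹)ᵀ = M⁻¹ := hM.inv.isHermitian.eq
  have hMMi : M * M⁻¹ = 1 := Matrix.mul_nonsing_inv _ hMd
  have hMiM : M⁻¹ * M = 1 := Matrix.nonsing_inv_mul _ hMd
  have hAP : A * P = 1 := Matrix.mul_nonsing_inv _ hAd
  have hBR : B * R = 1 := Matrix.mul_nonsing_inv _ hBd
  have hABBMA : A + B = B * M * A := by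
    rw [hMdef, Matrix.mul_add, Matrix.add_mul, Matrix.mul_assoc B P A, hPdef, hRdef,
      Matrix.nonsing_inv_mul _ hAd, Matrix.mul_nonsing_inv _ hBd, Matrix.mul_one,
      Matrix.one_mul]
    abel
  have hABAMB : A + B = A * M * B := by
    rw [hMdef, Matrix.mul_add, Matrix.add_mul, Matrix.mul_assoc A R B, hPdef, hRdef,
      Matrix.mul_nonsing_inv _ hAd, Matrix.nonsing_inv_mul _ hBd, Matrix.mul_one,
      Matrix.one_mul]
    abel
  have hQ1 : (A + B)⁻¹ = P * M⁻¹ * R := by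
    apply Matrix.inv_eq_right_inv
    rw [hABBMA]
    calc B * M * A * (P * M⁻¹ * R) = B * M * (A * P) * M⁻¹ * R := by
          simp only [Matrix.mul_assoc]
      _ = B * (M * M⁻¹) * R := by rw [hAP]; simp only [Matrix.mul_one, Matrix.mul_assoc]
      _ = 1 := by rw [hMMi, Matrix.mul_one, hBR]
  have hQ2 : (A + B)⁻¹ = R * M⁻¹ * P := by
    apply Matrix.inv_eq_right_inv
    rw [hABAMB]
    calc A * M * B * (R * M⁻¹ * P) = A * M * (B * R) * M⁻¹ * P := by
          simp only [Matrix.mul_assoc]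
      _ = A * (M * M⁻¹) * P := by rw [hBR]; simp only [Matrix.mul_one, Matrix.mul_assoc]
      _ = 1 := by rw [hMMi, Matrix.mul_one, hAP]
  have hPP : P * M⁻¹ * P = P - (A + B)⁻¹ := by
    rw [hQ1]
    have : R = M - P := by rw [hMdef]; abel
    rw [this, Matrix.mul_sub, Matrix.mul_assoc P M⁻¹ M, hMiM, Matrix.mul_one]
    abel
  have hRR : R * M⁻¹ * R = R - (A + B)⁻¹ := by
    rw [hQ2]
    have : P = M - R := by rw [hMdef]; abel
    rw [this, Matrix.mul_sub, Matrix.mul_assoc R M⁻¹ M, hMiM, Matrix.mul_one]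
    abel
  set v := P *ᵥ m1 + R *ᵥ m2 with hv
  set μ := M⁻¹ *ᵥ v with hμ
  have hMμ : M *ᵥ μ = v := by
    rw [hμ, Matrix.mulVec_mulVec, hMMi, Matrix.one_mulVec]
  have expand : ∀ (C : Matrix (Fin N) (Fin N) ℝ) (a b : Fin N → ℝ),
      (a - b) ⬝ᵥ (C *ᵥ (a - b)) = a ⬝ᵥ (C *ᵥ a) - a ⬝ᵥ (C *ᵥ b) - b ⬝ᵥ (C *ᵥ a)
        + b ⬝ᵥ (C *ᵥ b) := by
    intro C a b
    simp only [Matrix.mulVec_sub, sub_dotProduct, dotProduct_sub]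
    ring
  rw [expand P x m1, expand R x m2, expand M x μ, expand ((A+B)⁻¹) m1 m2]
  have h1 : x ⬝ᵥ (M *ᵥ μ) = x ⬝ᵥ (P *ᵥ m1) + x ⬝ᵥ (R *ᵥ m2) := by
    rw [hMμ, hv, dotProduct_add]
  have h2 : μ ⬝ᵥ (M *ᵥ x) = x ⬝ᵥ (P *ᵥ m1) + x ⬝ᵥ (R *ᵥ m2) := by
    rw [genRBF_dot_swap (by rw [hMdef, Matrix.transpose_add, hPs, hRs]) μ x, h1]
  have h3 : μ ⬝ᵥ (M *ᵥ μ) = m1 ⬝ᵥ ((P * M⁻¹ * P) *ᵥ m1) + m1 ⬝ᵥ (((A+B)⁻¹) *ᵥ m2)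
      + m2 ⬝ᵥ (((A+B)⁻¹) *ᵥ m1) + m2 ⬝ᵥ ((R * M⁻¹ * R) *ᵥ m2) := by
    rw [hMμ, hμ, dotProduct_comm, hv]
    simp only [Matrix.mulVec_add, add_dotProduct, dotProduct_add,
      genRBF_dot_collapse hPs, genRBF_dot_collapse hRs, Matrix.mulVec_mulVec]
    simp only [← Matrix.mul_assoc]
    rw [← hQ1, ← hQ2]
    ring
  have h4 : x ⬝ᵥ (M *ᵥ x) = x ⬝ᵥ (P *ᵥ x) + x ⬝ᵥ (R *ᵥ x) := by
    rw [hMdef, Matrix.add_mulVec, dotProduct_add]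
  have h5 : m1 ⬝ᵥ (P *ᵥ x) = x ⬝ᵥ (P *ᵥ m1) := genRBF_dot_swap hPs m1 x
  have h6 : m2 ⬝ᵥ (R *ᵥ x) = x ⬝ᵥ (R *ᵥ m2) := genRBF_dot_swap hRs m2 x
  have h7 : m1 ⬝ᵥ ((P * M⁻¹ * P) *ᵥ m1) = m1 ⬝ᵥ (P *ᵥ m1) - m1 ⬝ᵥ (((A+B)⁻¹) *ᵥ m1) := by
    rw [hPP, Matrix.sub_mulVec, dotProduct_sub]
  have h8 : m2 ⬝ᵥ ((R * M⁻¹ * R) *ᵥ m2) = m2 ⬝ᵥ (R *ᵥ m2) - m2 ⬝ᵥ (((A+B)⁻¹) *ᵥ m2) := by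
    rw [hRR, Matrix.sub_mulVec, dotProduct_sub]
  rw [h1, h2, h3, h4, h5, h6, h7, h8]
  ring

end helpers

open Matrix MeasureTheory

/-- The Gaussian density `N(m,Σ)(w) = (2π)^{-k/2} det(Σ)^{-1/2} exp(-½ (w-m)ᵀ Σ⁻¹ (w-m))`
on `ℝ^k`. -/
noncomputable def gaussPDF {k : ℕ} (m : Fin k → ℝ) (S : Matrix (Fin k) (Fin k) ℝ)
    (w : Fin k → ℝ) : ℝ :=
  (2 * Real.pi) ^ (-(k : ℝ) / 2) * S.det ^ (-(1 : ℝ) / 2) *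
    Real.exp (-(1 / 2) * ((w - m) ⬝ᵥ (S⁻¹ *ᵥ (w - m))))

section helpers2
variable {N : ℕ}

private lemma genRBF_int_quad_sub (M : Matrix (Fin N) (Fin N) ℝ) (hM : M.PosDef)
    (μ : Fin N → ℝ) :
    ∫ x : Fin N → ℝ, Real.exp (-(1/2) * ((x - μ) ⬝ᵥ (M *ᵥ (x - μ))))
      = (2 * Real.pi) ^ ((N : ℝ)/2) * M.det ^ (-(1:ℝ)/2) := by
  simp_rw [sub_eq_add_neg]
  rw [integral_add_right_eq_self (fun y => Real.exp (-(1/2) * (y ⬝ᵥ (M *ᵥ y)))) (-μ)]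
  exact genRBF_int_quad M hM

private lemma genRBF_integral_mul (m1 m2 : Fin N → ℝ) (A B : Matrix (Fin N) (Fin N) ℝ)
    (hA : A.PosDef) (hB : B.PosDef) :
    ∫ x, gaussPDF m1 A x * gaussPDF m2 B x
      = (2 * Real.pi) ^ (-(N:ℝ)/2) * (A+B).det ^ (-(1:ℝ)/2) *
        Real.exp (-(1/2) * ((m1-m2) ⬝ᵥ ((A+B)⁻¹ *ᵥ (m1-m2)))) := by
  have hMpd : (A⁻¹ + B⁻¹).PosDef := hA.inv.add hB.inv
  have hAd : IsUnit A.det := isUnit_iff_ne_zero.2 hA.det_pos.ne'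
  have hBd : IsUnit B.det := isUnit_iff_ne_zero.2 hB.det_pos.ne'
  set μ := (A⁻¹ + B⁻¹)⁻¹ *ᵥ (A⁻¹ *ᵥ m1 + B⁻¹ *ᵥ m2) with hμ
  have h1 : ∀ x, gaussPDF m1 A x * gaussPDF m2 B x
      = ((2*Real.pi) ^ (-(N:ℝ)/2) * A.det ^ (-(1:ℝ)/2)
          * ((2*Real.pi) ^ (-(N:ℝ)/2) * B.det ^ (-(1:ℝ)/2))
          * Real.exp (-(1/2) * ((m1-m2) ⬝ᵥ ((A+B)⁻¹ *ᵥ (m1-m2)))))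
        * Real.exp (-(1/2) * ((x - μ) ⬝ᵥ ((A⁻¹+B⁻¹) *ᵥ (x - μ)))) := by
    intro x
    unfold gaussPDF
    have hq : -(1/2) * ((x - m1) ⬝ᵥ (A⁻¹ *ᵥ (x - m1))) + -(1/2) * ((x - m2) ⬝ᵥ (B⁻¹ *ᵥ (x - m2)))
        = -(1/2) * ((m1-m2) ⬝ᵥ ((A+B)⁻¹ *ᵥ (m1-m2)))
          + -(1/2) * ((x - μ) ⬝ᵥ ((A⁻¹+B⁻¹) *ᵥ (x - μ))) := by
      rw [hμ]
      have := genRBF_complete_square A B hA hB m1 m2 x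
      linarith
    have e1 : Real.exp (-(1/2) * ((x - m1) ⬝ᵥ (A⁻¹ *ᵥ (x - m1))))
          * Real.exp (-(1/2) * ((x - m2) ⬝ᵥ (B⁻¹ *ᵥ (x - m2))))
        = Real.exp (-(1/2) * ((m1-m2) ⬝ᵥ ((A+B)⁻¹ *ᵥ (m1-m2))))
          * Real.exp (-(1/2) * ((x - μ) ⬝ᵥ ((A⁻¹+B⁻¹) *ᵥ (x - μ)))) := by
      rw [← Real.exp_add, ← Real.exp_add, hq]
    calc (2*Real.pi) ^ (-(N:ℝ)/2) * A.det ^ (-(1:ℝ)/2)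
            * Real.exp (-(1/2) * ((x - m1) ⬝ᵥ (A⁻¹ *ᵥ (x - m1))))
          * ((2*Real.pi) ^ (-(N:ℝ)/2) * B.det ^ (-(1:ℝ)/2)
            * Real.exp (-(1/2) * ((x - m2) ⬝ᵥ (B⁻¹ *ᵥ (x - m2)))))
        = (2*Real.pi) ^ (-(N:ℝ)/2) * A.det ^ (-(1:ℝ)/2)
            * ((2*Real.pi) ^ (-(N:ℝ)/2) * B.det ^ (-(1:ℝ)/2))
          * (Real.exp (-(1/2) * ((x - m1) ⬝ᵥ (A⁻¹ *ᵥ (x - m1))))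
            * Real.exp (-(1/2) * ((x - m2) ⬝ᵥ (B⁻¹ *ᵥ (x - m2))))) := by ring
      _ = _ := by rw [e1]; ring
  simp_rw [h1]
  rw [MeasureTheory.integral_const_mul, genRBF_int_quad_sub _ hMpd μ]
  have hkey : A⁻¹ + B⁻¹ = A⁻¹ * (A + B) * B⁻¹ := by
    rw [Matrix.mul_add, Matrix.add_mul, Matrix.mul_assoc A⁻¹ B B⁻¹,
      Matrix.mul_nonsing_inv _ hBd, Matrix.nonsing_inv_mul _ hAd,
      Matrix.mul_one, Matrix.one_mul, add_comm]
  have hdet : (A⁻¹ + B⁻¹).det = A.det⁻¹ * (A+B).det * B.det⁻¹ := by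
    rw [hkey, Matrix.det_mul, Matrix.det_mul, Matrix.det_nonsing_inv, Matrix.det_nonsing_inv]
    simp [Ring.inverse_eq_inv']
  rw [hdet]
  have hp : (0:ℝ) < 2*Real.pi := by positivity
  have ha := hA.det_pos
  have hb := hB.det_pos
  have hs : 0 < (A+B).det := (hA.add hB).det_pos
  have h1 : (0:ℝ) < A.det⁻¹ * (A+B).det * B.det⁻¹ := by positivity
  simp only [Real.rpow_def_of_pos hp, Real.rpow_def_of_pos ha, Real.rpow_def_of_pos hb,
    Real.rpow_def_of_pos hs, Real.rpow_def_of_pos h1]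
  rw [Real.log_mul (by positivity) (by positivity), Real.log_mul (by positivity) (by positivity),
    Real.log_mul (by positivity) (by positivity), Real.log_inv, Real.log_inv]
  simp only [← Real.exp_add]
  rw [Real.exp_eq_exp]
  ring

end helpers2

/-- The genRBF kernel formula: the normalized L² scalar product of the regularized
Gaussian densities `N(mᵛ, Σᵛ + σ²I)` and `N(mʷ, Σʷ + σ²I)` equals
`Z(V,W) exp(-½ ‖mᵛ - mʷ‖²_Σ̂)` with `Σ̂ = 2σ²I + Σᵛ + Σʷ`. -/
theorem genRBF_kernel_formula {N : ℕ}
    (σ : ℝ) (hσ : 0 < σ)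
    (mV mW : Fin N → ℝ)
    (SV SW : Matrix (Fin N) (Fin N) ℝ)
    (hV : SV.PosSemidef) (hW : SW.PosSemidef)
    (Shat : Matrix (Fin N) (Fin N) ℝ)
    (hShat : Shat = (2 * σ ^ 2) • (1 : Matrix (Fin N) (Fin N) ℝ) + SV + SW)
    (Z : ℝ)
    (hZ : Z = (1 + (σ ^ 2)⁻¹ • SV).det ^ ((1 : ℝ) / 4) *
        (1 + (σ ^ 2)⁻¹ • SW).det ^ ((1 : ℝ) / 4) /
        (1 + (2 * σ ^ 2)⁻¹ • (SV + SW)).det ^ ((1 : ℝ) / 2)) :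
    (∫ x, gaussPDF mV (SV + σ ^ 2 • 1) x * gaussPDF mW (SW + σ ^ 2 • 1) x) /
        ((∫ x, (gaussPDF mV (SV + σ ^ 2 • 1) x) ^ 2) ^ ((1 : ℝ) / 2) *
          (∫ x, (gaussPDF mW (SW + σ ^ 2 • 1) x) ^ 2) ^ ((1 : ℝ) / 2)) =
      Z * Real.exp (-(1 / 2) * ((mV - mW) ⬝ᵥ (Shat⁻¹ *ᵥ (mV - mW)))) := by
  have ht : (0:ℝ) < σ^2 := by positivity
  have hIpd : ((σ^2) • (1 : Matrix (Fin N) (Fin N) ℝ)).PosDef := by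
    rw [Matrix.smul_one_eq_diagonal]
    exact Matrix.PosDef.diagonal (fun _ => ht)
  have hApd : (SV + σ^2 • 1).PosDef := Matrix.PosDef.posSemidef_add hV hIpd
  have hBpd : (SW + σ^2 • 1).PosDef := Matrix.PosDef.posSemidef_add hW hIpd
  have hABS : (SV + σ^2 • 1) + (SW + σ^2 • 1) = Shat := by
    rw [hShat, two_mul, add_smul]
    abel
  rw [genRBF_integral_mul mV mW _ _ hApd hBpd]
  have hden : ∀ (m : Fin N → ℝ) (C : Matrix (Fin N) (Fin N) ℝ), C.PosDef →
      (∫ x, (gaussPDF m C x)^2)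
        = (2 * Real.pi) ^ (-(N:ℝ)/2) * ((2:ℝ)^N * C.det) ^ (-(1:ℝ)/2) := by
    intro m C hC
    simp_rw [pow_two]
    rw [genRBF_integral_mul m m C C hC hC]
    have h2C : C + C = (2:ℝ) • C := (two_smul ℝ C).symm
    rw [h2C, Matrix.det_smul, Fintype.card_fin]
    simp
  rw [hden mV _ hApd, hden mW _ hBpd]
  have hZV : (1 : Matrix (Fin N) (Fin N) ℝ) + (σ^2)⁻¹ • SV = (σ^2)⁻¹ • (SV + σ^2 • 1) := by
    rw [smul_add, smul_smul, inv_mul_cancel₀ ht.ne', one_smul, add_comm]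
  have hZW : (1 : Matrix (Fin N) (Fin N) ℝ) + (σ^2)⁻¹ • SW = (σ^2)⁻¹ • (SW + σ^2 • 1) := by
    rw [smul_add, smul_smul, inv_mul_cancel₀ ht.ne', one_smul, add_comm]
  have h2t : (0:ℝ) < 2*σ^2 := by positivity
  have hZS : (1 : Matrix (Fin N) (Fin N) ℝ) + (2*σ^2)⁻¹ • (SV + SW) = (2*σ^2)⁻¹ • Shat := by
    rw [hShat, smul_add, smul_add, smul_add, smul_smul, inv_mul_cancel₀ h2t.ne', one_smul]
    abel
  rw [hZ, hZV, hZW, hZS, Matrix.det_smul, Matrix.det_smul, Matrix.det_smul, Fintype.card_fin,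
    ← hABS]
  have hp : (0:ℝ) < 2*Real.pi := by positivity
  have ha := hApd.det_pos
  have hb := hBpd.det_pos
  have hs : 0 < ((SV + σ^2 • 1) + (SW + σ^2 • 1)).det := (hApd.add hBpd).det_pos
  have hq1 : (0:ℝ) < (2:ℝ)^N * (SV + σ^2 • 1).det := by positivity
  have hq2 : (0:ℝ) < (2:ℝ)^N * (SW + σ^2 • 1).det := by positivity
  have hr1 : (0:ℝ) < ((σ^2)⁻¹)^N * (SV + σ^2 • 1).det := by positivity
  have hr2 : (0:ℝ) < ((σ^2)⁻¹)^N * (SW + σ^2 • 1).det := by positivity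
  have hr3 : (0:ℝ) < ((2*σ^2)⁻¹)^N * ((SV + σ^2 • 1) + (SW + σ^2 • 1)).det := by positivity
  simp only [Real.rpow_def_of_pos hp, Real.rpow_def_of_pos hs, Real.rpow_def_of_pos hq1,
    Real.rpow_def_of_pos hq2, Real.rpow_def_of_pos hr1, Real.rpow_def_of_pos hr2,
    Real.rpow_def_of_pos hr3, ← Real.exp_add, genRBF_exp_rpow]
  rw [Real.log_mul (by positivity) ha.ne', Real.log_mul (by positivity) hb.ne',
    Real.log_mul (by positivity) ha.ne', Real.log_mul (by positivity) hb.ne',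
    Real.log_mul (by positivity) hs.ne', Real.log_pow, Real.log_pow, Real.log_pow,
    Real.log_inv, Real.log_inv,
    Real.log_mul (two_ne_zero) ht.ne']
  simp only [div_eq_mul_inv, ← Real.exp_neg, ← Real.exp_add]
  rw [Real.exp_eq_exp]
  ring
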